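/- Let A be a finite nonempty alphabet, let b ≥ 2 be an integer, and let ℓ : A → ℝ be a function satisfying Kraft's inequality ∑_{a ∈ A} b^{-ℓ(a)} ≤ 1. Then for every ε > 0 there exists an integer n ≥ 1 and a prefix-free code κ : (Fin n → A) → List (Fin b) such that for every block w : Fin n → A one has |(length of κ(w)) − ∑_{i} ℓ(w i)| ≤ n·ε. -/

import Mathlib

namespace KraftAux

variable {b : ℕ}

def pad (hb : 0 < b) : ℕ → ℕ → List (Fin b)
  | 0, _ => []
  | (L+1), a => ⟨a / b ^ L % b, Nat.mod_lt _ hb⟩ :: pad hb L a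

@[simp] lemma length_pad (hb : 0 < b) (L a : ℕ) : (pad hb L a).length = L := by
  induction L generalizing a with
  | zero => rfl
  | succ L ih => simp [pad, ih]

lemma pad_append (hb : 0 < b) (m n a : ℕ) :
    pad hb (m + n) a = pad hb m (a / b ^ n) ++ pad hb n a := by
  induction m with
  | zero => simp [pad]
  | succ m ih =>
      have h : m + 1 + n = (m + n) + 1 := by omega
      rw [h]
      simp only [pad, ih, List.cons_append]
      congr 2
      rw [Nat.div_div_eq_div_mul, ← pow_add, Nat.add_comm n m]

lemma pad_mod_eq (hb : 0 < b) {L a a' : ℕ} (h : pad hb L a = pad hb L a') :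
    a % b ^ L = a' % b ^ L := by
  induction L generalizing a a' with
  | zero => simp [pow_zero, Nat.mod_one]
  | succ L ih =>
      simp only [pad, List.cons.injEq, Fin.mk.injEq] at h
      rw [Nat.mod_pow_succ, Nat.mod_pow_succ, h.1, ih h.2]

/-- Kraft converse for sorted natural lengths. -/
lemma kraft_nat {m : ℕ} (hb : 0 < b) (f : Fin m → ℕ) (hmono : Monotone f) (M : ℕ)
    (hfM : ∀ j, f j ≤ M) (hsum : ∑ j, b ^ (M - f j) ≤ b ^ M) :
    ∃ κ : Fin m → List (Fin b), (∀ j, (κ j).length = f j) ∧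
      ∀ j k, j ≠ k → ¬ κ j <+: κ k := by
  classical
  set N : Fin m → ℕ := fun k => ∑ j ∈ Finset.univ.filter (fun j => j < k), b ^ (M - f j)
    with hN
  have hdvd : ∀ k, b ^ (M - f k) ∣ N k := by
    intro k
    refine Finset.dvd_sum fun j hj => ?_
    simp only [Finset.mem_filter] at hj
    exact pow_dvd_pow b (Nat.sub_le_sub_left (hmono hj.2.le) M)
  have hsep : ∀ j k : Fin m, j < k → N j + b ^ (M - f j) ≤ N k := by
    intro j k hjk
    have hsub : insert j (Finset.univ.filter (fun i => i < j)) ⊆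
        Finset.univ.filter (fun i => i < k) := by
      intro i hi
      simp only [Finset.mem_insert, Finset.mem_filter, Finset.mem_univ, true_and] at *
      rcases hi with rfl | hi
      · exact hjk
      · exact hi.trans hjk
    have hnotmem : j ∉ Finset.univ.filter (fun i => i < j) := by simp
    calc N j + b ^ (M - f j)
        = ∑ i ∈ insert j (Finset.univ.filter (fun i => i < j)), b ^ (M - f i) := by
          rw [Finset.sum_insert hnotmem]; ring
      _ ≤ N k := Finset.sum_le_sum_of_subset hsub
  have htop : ∀ k : Fin m, N k + b ^ (M - f k) ≤ b ^ M := by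
    intro k
    have hnotmem : k ∉ Finset.univ.filter (fun i => i < k) := by simp
    calc N k + b ^ (M - f k)
        = ∑ i ∈ insert k (Finset.univ.filter (fun i => i < k)), b ^ (M - f i) := by
          rw [Finset.sum_insert hnotmem]; ring
      _ ≤ ∑ j, b ^ (M - f j) := Finset.sum_le_sum_of_subset (Finset.subset_univ _)
      _ ≤ b ^ M := hsum
  set a : Fin m → ℕ := fun k => N k / b ^ (M - f k) with ha
  have hmulN : ∀ k, a k * b ^ (M - f k) = N k := fun k => Nat.div_mul_cancel (hdvd k)
  have hpow_pos : ∀ i : ℕ, 0 < b ^ i := fun i => Nat.pow_pos hb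
  have hlt : ∀ k, a k < b ^ (f k) := by
    intro k
    have h1 : (a k + 1) * b ^ (M - f k) ≤ b ^ (f k) * b ^ (M - f k) := by
      rw [add_mul, one_mul, hmulN, ← pow_add]
      have : f k + (M - f k) = M := by have := hfM k; omega
      rw [this]; exact htop k
    have := Nat.le_of_mul_le_mul_right h1 (hpow_pos _)
    omega
  refine ⟨fun k => pad hb (f k) (a k), fun k => length_pad hb _ _, ?_⟩
  intro j k hne hpre
  obtain ⟨t, ht⟩ := hpre
  have hlen : f j + t.length = f k := by
    have := congrArg List.length ht
    simpa using this
  set nn := t.length with hnn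
  have hsplit : pad hb (f k) (a k) = pad hb (f j) (a k / b ^ nn) ++ pad hb nn (a k) := by
    rw [← hlen]; exact pad_append hb _ _ _
  have heq : pad hb (f j) (a j) = pad hb (f j) (a k / b ^ nn) :=
    List.append_inj_left (ht.trans hsplit) (by simp)
  have hdivlt : a k / b ^ nn < b ^ (f j) := by
    rw [Nat.div_lt_iff_lt_mul (hpow_pos nn), ← pow_add, hlen]
    exact hlt k
  have haeq : a j = a k / b ^ nn := by
    have := pad_mod_eq hb heq
    rwa [Nat.mod_eq_of_lt (hlt j), Nat.mod_eq_of_lt hdivlt] at this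
  have hklt : a k < (a j + 1) * b ^ nn := by
    rw [← Nat.div_lt_iff_lt_mul (hpow_pos nn), ← haeq]
    omega
  rcases lt_or_gt_of_ne hne with hjk | hkj
  · -- j < k
    have hsep' := hsep j k hjk
    have hmul : a k * b ^ (M - f k) < (a j + 1) * b ^ nn * b ^ (M - f k) :=
      (Nat.mul_lt_mul_right (hpow_pos _)).mpr hklt
    have hexp : nn + (M - f k) = M - f j := by have := hfM k; omega
    rw [mul_assoc, ← pow_add, hexp, hmulN, add_mul, one_mul, hmulN] at hmul
    omega
  · -- k < j
    have hfk : f k ≤ f j := hmono hkj.le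
    have hfeq : f j = f k := by omega
    have hnn0 : nn = 0 := by omega
    have haj : a j = a k := by rw [haeq, hnn0, pow_zero, Nat.div_one]
    have hsep' := hsep k j hkj
    have h1 := hmulN j
    have h2 := hmulN k
    rw [haj, hfeq] at h1
    have := hpow_pos (M - f k)
    omega

end KraftAux

namespace KraftAux2

/-- Kraft converse over an arbitrary fintype, with real-valued Kraft sum. -/
lemma kraft_fintype {b : ℕ} (hb : 2 ≤ b) {W : Type*} [Fintype W] (L : W → ℕ)
    (hsum : ∑ w : W, (b : ℝ) ^ (-(L w : ℝ)) ≤ 1) :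
    ∃ κ : W → List (Fin b), (∀ w, (κ w).length = L w) ∧
      ∀ w₁ w₂, w₁ ≠ w₂ → ¬ κ w₁ <+: κ w₂ := by
  classical
  have hb0 : 0 < b := by omega
  have hbR : (1 : ℝ) ≤ (b : ℝ) := by exact_mod_cast hb0
  set m := Fintype.card W
  let e : W ≃ Fin m := Fintype.equivFin W
  let σ : Equiv.Perm (Fin m) := Tuple.sort (L ∘ e.symm)
  let ι : Fin m ≃ W := σ.trans e.symm
  set f : Fin m → ℕ := fun j => L (ι j) with hf
  have hmono : Monotone f := Tuple.monotone_sort (L ∘ e.symm)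
  set M : ℕ := Finset.univ.sup f with hM
  have hfM : ∀ j, f j ≤ M := fun j => Finset.le_sup (Finset.mem_univ j)
  have hbRpos : (0 : ℝ) < (b : ℝ) := by positivity
  have hsum' : ∑ j, b ^ (M - f j) ≤ b ^ M := by
    have hcast : ((∑ j, b ^ (M - f j) : ℕ) : ℝ) ≤ ((b ^ M : ℕ) : ℝ) := by
      push_cast
      have hterm : ∀ j : Fin m, (b : ℝ) ^ (M - f j : ℕ) =
          (b : ℝ) ^ M * (b : ℝ) ^ (-(f j : ℝ)) := by
        intro j
        rw [pow_sub₀ _ (by positivity) (hfM j)]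
        congr 1
        rw [← Real.rpow_natCast (b : ℝ) (f j), ← Real.rpow_neg hbRpos.le]
      calc ∑ j, (b : ℝ) ^ (M - f j : ℕ)
          = (b : ℝ) ^ M * ∑ j, (b : ℝ) ^ (-(f j : ℝ)) := by
            rw [Finset.mul_sum]; exact Finset.sum_congr rfl fun j _ => hterm j
        _ ≤ (b : ℝ) ^ M * 1 := by
            refine mul_le_mul_of_nonneg_left ?_ (by positivity)
            calc ∑ j, (b : ℝ) ^ (-(f j : ℝ))
                = ∑ w, (b : ℝ) ^ (-(L w : ℝ)) :=
                  Fintype.sum_equiv ι _ _ (fun j => rfl)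
              _ ≤ 1 := hsum
        _ = (b : ℝ) ^ M := mul_one _
    exact_mod_cast hcast
  obtain ⟨κ₀, hlen, hpf⟩ := KraftAux.kraft_nat hb0 f hmono M hfM hsum'
  refine ⟨fun w => κ₀ (ι.symm w), fun w => by rw [hlen]; simp [hf], ?_⟩
  intro w₁ w₂ hne
  exact hpf _ _ (fun h => hne (by simpa using congrArg ι h))

end KraftAux2

/-- If a real-valued length function `ℓ` on a finite nonempty alphabet `A`
satisfies Kraft's inequality for an output alphabet of size `b ≥ 2`, then for every `ε > 0`
there is a block length `n ≥ 1` and a prefix-free fixed-to-variable length block code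
`κ : (Fin n → A) → List (Fin b)` whose codeword lengths differ from the summed lengths
`∑ i, ℓ (w i)` by at most `n * ε`. -/
theorem kraft_implies_block_code {A : Type*} [Fintype A] [Nonempty A]
    (b : ℕ) (hb : 2 ≤ b) (ℓ : A → ℝ)
    (hKraft : ∑ a : A, (b : ℝ) ^ (-(ℓ a)) ≤ 1) :
    ∀ ε > 0, ∃ n : ℕ, 1 ≤ n ∧ ∃ κ : (Fin n → A) → List (Fin b),
      (∀ w₁ w₂ : Fin n → A, w₁ ≠ w₂ → ¬ (κ w₁ <+: κ w₂)) ∧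
      (∀ w : Fin n → A, |((κ w).length : ℝ) - ∑ i, ℓ (w i)| ≤ n * ε) := by
  classical
  intro ε hε
  have hbR : (1 : ℝ) < (b : ℝ) := by exact_mod_cast (by omega : 1 < b)
  have hbpos : (0 : ℝ) < (b : ℝ) := by positivity
  -- ℓ is nonnegative
  have hℓ : ∀ a, 0 ≤ ℓ a := by
    intro a
    by_contra hneg
    push_neg at hneg
    have h1 : (1 : ℝ) < (b : ℝ) ^ (-(ℓ a)) :=
      (Real.one_lt_rpow_iff_of_pos hbpos).mpr (Or.inl ⟨hbR, by linarith⟩)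
    have h2 : (b : ℝ) ^ (-(ℓ a)) ≤ ∑ a' : A, (b : ℝ) ^ (-(ℓ a')) :=
      Finset.single_le_sum (f := fun a' => (b : ℝ) ^ (-(ℓ a'))) (fun a' _ => Real.rpow_nonneg hbpos.le _) (Finset.mem_univ a)
    linarith
  set n : ℕ := ⌈1 / ε⌉₊ + 1 with hn
  have h1n : 1 ≤ n := by omega
  have hnε : 1 ≤ (n : ℝ) * ε := by
    have h1 : 1 / ε ≤ (n : ℕ) := (Nat.le_ceil _).trans (by exact_mod_cast Nat.le_succ _)
    calc (1 : ℝ) = (1 / ε) * ε := by field_simp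
      _ ≤ (n : ℝ) * ε := mul_le_mul_of_nonneg_right h1 hε.le
  set L : (Fin n → A) → ℕ := fun w => ⌈∑ i, ℓ (w i)⌉₊ with hL
  have hsum : ∑ w : Fin n → A, (b : ℝ) ^ (-(L w : ℝ)) ≤ 1 := by
    calc ∑ w : Fin n → A, (b : ℝ) ^ (-(L w : ℝ))
        ≤ ∑ w : Fin n → A, (b : ℝ) ^ (-(∑ i, ℓ (w i))) := by
          refine Finset.sum_le_sum fun w _ => ?_
          exact Real.rpow_le_rpow_of_exponent_le hbR.le (neg_le_neg (Nat.le_ceil _))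
      _ = ∑ w : Fin n → A, ∏ i, (b : ℝ) ^ (-(ℓ (w i))) := by
          refine Finset.sum_congr rfl fun w _ => ?_
          rw [← Finset.sum_neg_distrib, Real.rpow_sum_of_pos hbpos]
      _ = (∑ a : A, (b : ℝ) ^ (-(ℓ a))) ^ n := by
          rw [Finset.sum_pow' Finset.univ (fun a => (b : ℝ) ^ (-(ℓ a))) n,
            Fintype.piFinset_univ]
      _ ≤ 1 := pow_le_one₀ (Finset.sum_nonneg fun a _ => Real.rpow_nonneg hbpos.le _) hKraft
  obtain ⟨κ, hlen, hpf⟩ := KraftAux2.kraft_fintype hb L hsum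
  refine ⟨n, h1n, κ, hpf, fun w => ?_⟩
  have hx0 : 0 ≤ ∑ i, ℓ (w i) := Finset.sum_nonneg fun i _ => hℓ _
  rw [hlen w]
  rw [abs_le]
  constructor
  · have := Nat.le_ceil (∑ i, ℓ (w i))
    have : (0:ℝ) ≤ (L w : ℝ) - ∑ i, ℓ (w i) := by simp only [hL]; linarith
    nlinarith [mul_nonneg (Nat.cast_nonneg n (α := ℝ)) hε.le]
  · have h1 := Nat.ceil_lt_add_one hx0
    simp only [hL]
    linarith
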